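/- Assume the abc conjecture: for every ε > 0 there is κ(ε) > 0 such that for all coprime positive integers a, b, c with a + b = c, one has c < κ(ε)·rad(abc)^{1+ε}. Then for every ε > 0 there is κ'(ε) > 0 such that for all positive integers a, b, x ≥ 2, y ≥ 2 with a^x ≠ b^y, |a^x - b^y| ≥ κ'(ε)·max{a^x, b^y}^{1 - 1/x - 1/y - ε}. -/

import Mathlib

/-- The radical (squarefree kernel) of a natural number. -/
def rad (n : ℕ) : ℕ := ∏ p ∈ n.primeFactors, p

lemma rad_pos (n : ℕ) : 0 < rad n :=
  Finset.prod_pos fun p hp => (Nat.prime_of_mem_primeFactors hp).pos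

lemma rad_dvd_self (n : ℕ) : rad n ∣ n := Nat.prod_primeFactors_dvd n

lemma rad_dvd_rad {m n : ℕ} (h : m ∣ n) (hn : n ≠ 0) : rad m ∣ rad n :=
  Finset.prod_dvd_prod_of_subset _ _ _ (Nat.primeFactors_mono h hn)

lemma rad_mul_dvd (m n : ℕ) : rad (m * n) ∣ rad m * rad n := by
  have hsub : (m * n).primeFactors ⊆ m.primeFactors ∪ n.primeFactors := by
    rcases eq_or_ne m 0 with rfl | hm
    · simp
    rcases eq_or_ne n 0 with rfl | hn
    · simp
    rw [Nat.primeFactors_mul hm hn]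
  calc rad (m * n) ∣ ∏ p ∈ m.primeFactors ∪ n.primeFactors, p :=
        Finset.prod_dvd_prod_of_subset _ _ _ hsub
    _ ∣ rad m * rad n := by
        rw [show m.primeFactors ∪ n.primeFactors
            = m.primeFactors ∪ (n.primeFactors \ m.primeFactors) by
          rw [Finset.union_sdiff_self_eq_union],
          Finset.prod_union Finset.disjoint_sdiff]
        exact mul_dvd_mul dvd_rfl
          (Finset.prod_dvd_prod_of_subset _ _ _ (Finset.sdiff_subset))

set_option maxHeartbeats 1000000 in
lemma key (ε κ : ℝ) (hε : 0 < ε) (hκ : 0 < κ)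
    (habc : ∀ a b c : ℕ, 0 < a → 0 < b → 0 < c → Nat.Coprime a b → a + b = c →
      (c : ℝ) < κ * (rad (a * b * c) : ℝ) ^ (1 + ε))
    (a b x y : ℕ) (ha : 0 < a) (hb : 0 < b) (hx : 2 ≤ x) (hy : 2 ≤ y)
    (hlt : b ^ y < a ^ x) :
    (1/κ) ^ (1/(1+ε)) * ((a : ℝ) ^ x) ^ (1 - 1/(x:ℝ) - 1/(y:ℝ) - ε) ≤
      (a : ℝ) ^ x - (b : ℝ) ^ y := by
  -- natural number setup
  set d := Nat.gcd (a ^ x) (b ^ y) with hdd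
  have hax : 0 < a ^ x := pow_pos ha x
  have hby : 0 < b ^ y := pow_pos hb y
  have hd : 0 < d := Nat.gcd_pos_of_pos_left _ hax
  have hd1 : d ∣ a ^ x := Nat.gcd_dvd_left _ _
  have hd2 : d ∣ b ^ y := Nat.gcd_dvd_right _ _
  set A := b ^ y / d with hA_def
  set B := (a ^ x - b ^ y) / d with hB_def
  set C := a ^ x / d with hC_def
  have hdδ : d ∣ a ^ x - b ^ y := Nat.dvd_sub hd1 hd2
  have hδ : 0 < a ^ x - b ^ y := Nat.sub_pos_of_lt hlt
  have hA : 0 < A := Nat.div_pos (Nat.le_of_dvd hby hd2) hd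
  have hC : 0 < C := Nat.div_pos (Nat.le_of_dvd hax hd1) hd
  have hB : 0 < B := Nat.div_pos (Nat.le_of_dvd hδ hdδ) hd
  have hmulA : d * A = b ^ y := Nat.mul_div_cancel' hd2
  have hmulB : d * B = a ^ x - b ^ y := Nat.mul_div_cancel' hdδ
  have hmulC : d * C = a ^ x := Nat.mul_div_cancel' hd1
  have hABC : A + B = C := by
    apply Nat.eq_of_mul_eq_mul_left hd
    rw [Nat.mul_add, hmulA, hmulB, hmulC]
    omega
  have hcopCA : Nat.Coprime C A := Nat.coprime_div_gcd_div_gcd hd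
  have hcopAB : Nat.Coprime A B := by
    have h1 : Nat.Coprime A (B + A) := by rw [add_comm, hABC]; exact hcopCA.symm
    exact Nat.coprime_add_self_right.mp h1
  -- radical bound
  have hradA : rad A ≤ b := by
    have hAdvd : A ∣ b ^ y := ⟨d, by rw [← hmulA, mul_comm]⟩
    have h1 : rad A ∣ rad (b ^ y) := rad_dvd_rad hAdvd hby.ne'
    have h2 : rad (b ^ y) = rad b := by
      unfold rad; rw [Nat.primeFactors_pow b (by omega)]
    exact Nat.le_of_dvd hb ((h2 ▸ h1).trans (rad_dvd_self b))
  have hradC : rad C ≤ a := by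
    have hCdvd : C ∣ a ^ x := ⟨d, by rw [← hmulC, mul_comm]⟩
    have h1 : rad C ∣ rad (a ^ x) := rad_dvd_rad hCdvd hax.ne'
    have h2 : rad (a ^ x) = rad a := by
      unfold rad; rw [Nat.primeFactors_pow a (by omega)]
    exact Nat.le_of_dvd ha ((h2 ▸ h1).trans (rad_dvd_self a))
  have hradB : rad B ≤ B := Nat.le_of_dvd hB (rad_dvd_self B)
  have hradABC : rad (A * B * C) ≤ a * b * B := by
    have h1 : rad (A * B * C) ∣ rad A * rad B * rad C :=
      (rad_mul_dvd _ _).trans (mul_dvd_mul (rad_mul_dvd _ _) dvd_rfl)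
    have h2 : rad (A * B * C) ≤ rad A * rad B * rad C :=
      Nat.le_of_dvd (Nat.mul_pos (Nat.mul_pos (rad_pos A) (rad_pos B)) (rad_pos C)) h1
    calc rad (A * B * C) ≤ rad A * rad B * rad C := h2
      _ ≤ b * B * a := by
          exact Nat.mul_le_mul (Nat.mul_le_mul hradA hradB) hradC
      _ = a * b * B := by ring
  have habc' := habc A B C hA hB hC hcopAB hABC
  -- real setup
  set X := (x : ℝ) with hX_def
  set Y := (y : ℝ) with hY_def
  have hX : (2:ℝ) ≤ X := by rw [hX_def]; exact_mod_cast hx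
  have hY : (2:ℝ) ≤ Y := by rw [hY_def]; exact_mod_cast hy
  have hε1 : (0:ℝ) < 1 + ε := by linarith
  set M : ℝ := (a : ℝ) ^ x with hM_def
  have hMpos : (0:ℝ) < M := by positivity
  have hM1 : (1:ℝ) ≤ M := one_le_pow₀ (by exact_mod_cast ha)
  have hdR : (1:ℝ) ≤ (d:ℝ) := by exact_mod_cast hd
  have hδR1 : (1:ℝ) ≤ ((a ^ x - b ^ y : ℕ) : ℝ) := by exact_mod_cast hδ
  have hδeq : ((a ^ x - b ^ y : ℕ) : ℝ) = M - (b:ℝ) ^ y := by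
    rw [Nat.cast_sub hlt.le]; push_cast; rfl
  set D : ℝ := ((a ^ x - b ^ y : ℕ) : ℝ) with hD_def
  -- step 1: M < κ * (a*b*D)^(1+ε)
  have habB : (0:ℝ) ≤ (a:ℝ) * (b:ℝ) * (B:ℝ) := by positivity
  have step1 : M < κ * ((a:ℝ) * (b:ℝ) * D) ^ (1+ε) := by
    have e1 : M = (d:ℝ) * (C:ℝ) := by rw [hM_def, ← Nat.cast_pow, ← hmulC]; push_cast; ring
    have e3 : ((rad (A*B*C)):ℝ) ^ (1+ε) ≤ ((a:ℝ) * (b:ℝ) * (B:ℝ)) ^ (1+ε) := by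
      apply Real.rpow_le_rpow (Nat.cast_nonneg _) _ hε1.le
      exact_mod_cast hradABC
    have e4 : (d:ℝ) * (((a:ℝ) * (b:ℝ) * (B:ℝ)) ^ (1+ε)) ≤
        ((a:ℝ) * (b:ℝ) * D) ^ (1+ε) := by
      have hDd : (a:ℝ) * (b:ℝ) * D = (d:ℝ) * ((a:ℝ) * (b:ℝ) * (B:ℝ)) := by
        have : D = (d:ℝ) * (B:ℝ) := by
          rw [hD_def, ← hmulB]; push_cast; ring
        rw [this]; ring
      rw [hDd, Real.mul_rpow (by linarith) habB]
      have hdd' : (d:ℝ) ≤ (d:ℝ) ^ (1+ε) := by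
        nth_rewrite 1 [← Real.rpow_one (d:ℝ)]
        exact Real.rpow_le_rpow_of_exponent_le hdR (by linarith)
      exact mul_le_mul_of_nonneg_right hdd' (Real.rpow_nonneg habB _)
    calc M = (d:ℝ) * (C:ℝ) := e1
      _ < (d:ℝ) * (κ * ((rad (A*B*C)):ℝ) ^ (1+ε)) := by
          apply mul_lt_mul_of_pos_left habc' (by linarith)
      _ ≤ (d:ℝ) * (κ * ((a:ℝ) * (b:ℝ) * (B:ℝ)) ^ (1+ε)) := by
          apply mul_le_mul_of_nonneg_left _ (by linarith)
          exact mul_le_mul_of_nonneg_left e3 hκ.le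
      _ = κ * ((d:ℝ) * (((a:ℝ) * (b:ℝ) * (B:ℝ)) ^ (1+ε))) := by ring
      _ ≤ κ * ((a:ℝ) * (b:ℝ) * D) ^ (1+ε) := mul_le_mul_of_nonneg_left e4 hκ.le
  -- step 2: a ≤ M^(1/X), b ≤ M^(1/Y)
  have hXne : X ≠ 0 := by linarith
  have hYne : Y ≠ 0 := by linarith
  have hMr : M = (a:ℝ) ^ (X : ℝ) := (Real.rpow_natCast (a:ℝ) x).symm
  have haM : (a:ℝ) ≤ M ^ (1/X) := by
    rw [hMr, ← Real.rpow_mul (Nat.cast_nonneg a)]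
    rw [show X * (1/X) = 1 by field_simp, Real.rpow_one]
  have hbyM : ((b:ℝ) ^ y) ≤ M := by rw [hM_def]; exact_mod_cast hlt.le
  have hbM : (b:ℝ) ≤ M ^ (1/Y) := by
    have hb1 : (b:ℝ) = ((b:ℝ) ^ y) ^ (1/Y) := by
      rw [← Real.rpow_natCast (b:ℝ) y, ← Real.rpow_mul (Nat.cast_nonneg b)]
      rw [show (y:ℝ) * (1/Y) = 1 by field_simp; rfl, Real.rpow_one]
    rw [hb1]
    exact Real.rpow_le_rpow (by positivity) hbyM (by positivity)
  -- step 3: M < κ * M^(s*(1+ε)) * D^(1+ε)  with s = 1/X + 1/Y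
  set s : ℝ := 1/X + 1/Y with hs_def
  have hDpos : (0:ℝ) < D := by linarith
  have step3 : M < κ * M ^ (s * (1+ε)) * D ^ (1+ε) := by
    have h1 : (a:ℝ) * (b:ℝ) * D ≤ M ^ s * D := by
      have : M ^ (1/X) * M ^ (1/Y) = M ^ s := (Real.rpow_add hMpos _ _).symm
      calc (a:ℝ) * (b:ℝ) * D ≤ M ^ (1/X) * M ^ (1/Y) * D := by
            apply mul_le_mul_of_nonneg_right _ hDpos.le
            exact mul_le_mul haM hbM (Nat.cast_nonneg b) (by positivity)
        _ = M ^ s * D := by rw [this]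
    have h2 : ((a:ℝ) * (b:ℝ) * D) ^ (1+ε) ≤ (M ^ s * D) ^ (1+ε) :=
      Real.rpow_le_rpow (by positivity) h1 hε1.le
    have h3 : (M ^ s * D) ^ (1+ε) = M ^ (s * (1+ε)) * D ^ (1+ε) := by
      rw [Real.mul_rpow (by positivity) hDpos.le, ← Real.rpow_mul hMpos.le]
    calc M < κ * ((a:ℝ) * (b:ℝ) * D) ^ (1+ε) := step1
      _ ≤ κ * (M ^ (s * (1+ε)) * D ^ (1+ε)) := by
          rw [← h3]; exact mul_le_mul_of_nonneg_left h2 hκ.le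
      _ = κ * M ^ (s * (1+ε)) * D ^ (1+ε) := by ring
  -- final derivation
  rw [show (a:ℝ) ^ x - (b:ℝ) ^ y = D by rw [hδeq, hM_def]]
  set g : ℝ := 1 - 1/X - 1/Y - ε with hg_def
  have hκ'pos : (0:ℝ) < (1/κ) ^ (1/(1+ε)) := Real.rpow_pos_of_pos (by positivity) _
  have key' : ((1/κ) ^ (1/(1+ε)) * M ^ g) ^ (1+ε) ≤ D ^ (1+ε) := by
    have lhs_eq : ((1/κ) ^ (1/(1+ε)) * M ^ g) ^ (1+ε) = (1/κ) * M ^ (g * (1+ε)) := by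
      rw [Real.mul_rpow hκ'pos.le (Real.rpow_nonneg hMpos.le _),
        ← Real.rpow_mul (by positivity), ← Real.rpow_mul hMpos.le,
        show (1/(1+ε)) * (1+ε) = 1 by field_simp, Real.rpow_one]
    rw [lhs_eq]
    have h1 : M ^ (g * (1+ε)) ≤ M ^ (1 - s * (1+ε)) := by
      apply Real.rpow_le_rpow_of_exponent_le hM1
      rw [hg_def, hs_def]; nlinarith
    have h2 : M ^ (1 - s * (1+ε)) ≤ κ * D ^ (1+ε) := by
      have hpow : (0:ℝ) < M ^ (s * (1+ε)) := Real.rpow_pos_of_pos hMpos _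
      rw [Real.rpow_sub hMpos, Real.rpow_one, div_le_iff₀ hpow]
      nlinarith [step3, Real.rpow_pos_of_pos hDpos (1+ε)]
    calc (1/κ) * M ^ (g * (1+ε)) ≤ (1/κ) * M ^ (1 - s * (1+ε)) := by
          apply mul_le_mul_of_nonneg_left h1 (by positivity)
      _ ≤ (1/κ) * (κ * D ^ (1+ε)) := mul_le_mul_of_nonneg_left h2 (by positivity)
      _ = D ^ (1+ε) := by field_simp
  exact (Real.rpow_le_rpow_iff (by positivity) hDpos.le hε1).mp key'

theorem abc_implies_quantitative_pillai
    (habc : ∀ ε : ℝ, 0 < ε → ∃ κ : ℝ, 0 < κ ∧ ∀ a b c : ℕ,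
      0 < a → 0 < b → 0 < c → Nat.Coprime a b → a + b = c →
      (c : ℝ) < κ * (rad (a * b * c) : ℝ) ^ (1 + ε)) :
    ∀ ε : ℝ, 0 < ε → ∃ κ' : ℝ, 0 < κ' ∧ ∀ a b x y : ℕ,
      0 < a → 0 < b → 2 ≤ x → 2 ≤ y → a ^ x ≠ b ^ y →
      κ' * (max ((a : ℝ) ^ x) ((b : ℝ) ^ y)) ^ (1 - 1 / (x : ℝ) - 1 / (y : ℝ) - ε) ≤
        |(a : ℝ) ^ x - (b : ℝ) ^ y| := by
  intro ε hε
  obtain ⟨κ, hκ, habc'⟩ := habc ε hε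
  refine ⟨(1/κ) ^ (1/(1+ε)), Real.rpow_pos_of_pos (by positivity) _, ?_⟩
  intro a b x y ha hb hx hy hne
  rcases lt_trichotomy (b ^ y) (a ^ x) with h | h | h
  · have hk := key ε κ hε hκ habc' a b x y ha hb hx hy h
    have hmax : max ((a:ℝ) ^ x) ((b:ℝ) ^ y) = (a:ℝ) ^ x :=
      max_eq_left (by exact_mod_cast h.le)
    have habs : |(a:ℝ) ^ x - (b:ℝ) ^ y| = (a:ℝ) ^ x - (b:ℝ) ^ y := by
      apply abs_of_nonneg; have : ((b:ℝ) ^ y) ≤ (a:ℝ) ^ x := by exact_mod_cast h.le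
      linarith
    rw [hmax, habs]; exact hk
  · exact absurd h.symm hne
  · have hk := key ε κ hε hκ habc' b a y x hb ha hy hx h
    have hmax : max ((a:ℝ) ^ x) ((b:ℝ) ^ y) = (b:ℝ) ^ y :=
      max_eq_right (by exact_mod_cast h.le)
    have habs : |(a:ℝ) ^ x - (b:ℝ) ^ y| = (b:ℝ) ^ y - (a:ℝ) ^ x := by
      rw [abs_sub_comm]; apply abs_of_nonneg
      have : ((a:ℝ) ^ x) ≤ (b:ℝ) ^ y := by exact_mod_cast h.le
      linarith
    rw [hmax, habs, show (1:ℝ) - 1/(x:ℝ) - 1/(y:ℝ) - ε = 1 - 1/(y:ℝ) - 1/(x:ℝ) - ε by ring]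
    exact hk
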